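/- arXiv:2105.08945 — 2 statements merged into one kernel-verified Lean document; each statement's English description precedes it below -/
import Mathlib

section
/- Let m, n be coprime positive integers and k a field whose characteristic does not divide mn (or char(k)=0). Then the set of (m,n)-torus-knot representations into AGL_1(k), namely {(t,α,β) ∈ k* × k × k : Φ_n(t^m)·α = Φ_m(t^n)·β}, has cardinality over a finite field k = F_q equal to (ξ_{nm} - ξ_n - ξ_m + 2)(q² - q), where ξ_l = gcd(l, q-1) is the number of l-th roots of unity in F_q. -/
open Finset
open scoped Classical

section Aux
variable {F : Type*} [Field F] [Fintype F]

/-- Number of solutions of a nontrivial linear equation `a*x = b*y` in `F²` is `|F|`. -/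
private lemma tk_line_card (a b : F) (h : ¬(a = 0 ∧ b = 0)) :
    #(univ.filter fun ab : F × F => a * ab.1 = b * ab.2) = Fintype.card F := by
  classical
  rcases eq_or_ne a 0 with rfl | ha
  · have hb : b ≠ 0 := fun hb => h ⟨rfl, hb⟩
    rw [← Finset.card_univ (α := F)]
    refine card_nbij' (fun ab => ab.1) (fun x => (x, 0)) ?_ ?_ ?_ ?_
    · intro _ _; exact mem_univ _
    · intro x _; simp
    · rintro ⟨x, y⟩ hxy
      simp only [mem_coe, mem_filter, zero_mul] at hxy
      have : y = 0 := by
        rcases mul_eq_zero.mp hxy.2.symm with h'|h'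
        · exact absurd h' hb
        · exact h'
      simp [this]
    · intro x _; rfl
  · rw [← Finset.card_univ (α := F)]
    refine card_nbij' (fun ab => ab.2) (fun y => (a⁻¹ * (b * y), y)) ?_ ?_ ?_ ?_
    · intro _ _; exact mem_univ _
    · intro y _
      simp only [mem_coe, mem_filter, mem_univ, true_and]
      field_simp
    · rintro ⟨x, y⟩ hxy
      simp only [mem_coe, mem_filter, mem_univ, true_and] at hxy
      have : a⁻¹ * (b * y) = x := by rw [← hxy]; field_simp
      simp [this]
    · intro y _; rfl

/-- Number of `l`-th roots of unity in a finite field is `gcd l (q-1)`. -/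
private lemma tk_card_roots (l : ℕ) (hl : 0 < l) :
    #(univ.filter fun t : F => t ^ l = 1) = Nat.gcd l (Fintype.card F - 1) := by
  classical
  have hcard : #(univ.filter fun t : F => t ^ l = 1)
      = #(univ.filter fun x : Fˣ => x ^ l = 1) := by
    refine (card_nbij (fun x : Fˣ => (x : F)) ?_ ?_ ?_).symm
    · intro x hx
      simp only [mem_coe, mem_filter, mem_univ, true_and] at hx ⊢
      rw [← Units.val_pow_eq_pow_val, hx, Units.val_one]
    · intro x _ y _ hxy
      exact Units.ext hxy
    · intro t ht
      simp only [coe_filter, Set.mem_setOf_eq, mem_univ, true_and] at ht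
      have ht0 : t ≠ 0 := by
        intro h0
        rw [h0, zero_pow hl.ne'] at ht
        exact zero_ne_one ht
      refine ⟨Units.mk0 t ht0, ?_, rfl⟩
      simp only [coe_filter, Set.mem_setOf_eq, mem_univ, true_and]
      ext
      rw [Units.val_pow_eq_pow_val, Units.val_mk0, Units.val_one, ht]
  rw [hcard]
  -- now count in the cyclic group Fˣ
  have hN : Fintype.card Fˣ = Fintype.card F - 1 := Fintype.card_units (α := F)
  set N := Fintype.card Fˣ with hNdef
  set d := Nat.gcd l N with hd
  have hdN : d ∣ N := Nat.gcd_dvd_right l N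
  have hd0 : 0 < d := Nat.gcd_pos_of_pos_left _ hl
  have hfilter : (univ.filter fun x : Fˣ => x ^ l = 1)
      = univ.filter fun x : Fˣ => x ^ d = 1 := by
    apply filter_congr
    intro x _
    rw [hd, pow_gcd_eq_one, hNdef, pow_card_eq_one, eq_self_iff_true, and_true]
  rw [hfilter, ← hN]
  -- #{x : Fˣ | x ^ d = 1} = d when d ∣ N
  refine le_antisymm (IsCyclic.card_pow_eq_one_le hd0) ?_
  obtain ⟨g, hg⟩ := IsCyclic.exists_generator (α := Fˣ)
  have hog : orderOf g = N := by
    rw [orderOf_eq_card_of_forall_mem_zpowers hg, Nat.card_eq_fintype_card]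
  set a := g ^ (N / d) with ha
  have hoa : orderOf a = d := by
    rw [ha, orderOf_pow, hog, Nat.gcd_eq_right (Nat.div_dvd_of_dvd hdN),
      Nat.div_div_self hdN (by positivity)]
  have key : Fintype.card (Subgroup.zpowers a) ≤ #(univ.filter fun x : Fˣ => x ^ d = 1) := by
    rw [← Fintype.card_coe (univ.filter fun x : Fˣ => x ^ d = 1)]
    refine Fintype.card_le_of_injective (fun x => ⟨x.1, ?_⟩) ?_
    · obtain ⟨k, hk⟩ := Subgroup.mem_zpowers_iff.mp x.2
      simp only [mem_filter, mem_univ, true_and]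
      rw [← hk, ← zpow_natCast, ← zpow_mul, mul_comm, zpow_mul, zpow_natCast, ← hoa,
        pow_orderOf_eq_one, one_zpow]
    · intro x y hxy
      exact Subtype.ext (Subtype.mk.inj hxy)
  have hcz : Fintype.card (Subgroup.zpowers a) = d := by
    rw [← Nat.card_eq_fintype_card, Nat.card_zpowers, hoa]
  calc d = Fintype.card (Subgroup.zpowers a) := hcz.symm
    _ ≤ _ := key

end Aux

/-- The `AGL₁(F_q)`-representation variety of the `(m,n)`-torus knot, identified with
`{(t,α,β) ∈ F_q* × F_q² : Φ_n(t^m)α = Φ_m(t^n)β}`, has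
`(ξ_{nm} - ξ_n - ξ_m + 2)(q² - q)` points, where `ξ_l = gcd(l, q-1)`. -/
theorem stmt11 (F : Type*) [Field F] [Fintype F] (m n : ℕ) (hm : 0 < m) (hn : 0 < n)
    (hcop : Nat.Coprime m n) (hchar : ¬ ringChar F ∣ m * n) :
    (Nat.card {p : F × F × F | p.1 ≠ 0 ∧
        (∑ i ∈ Finset.range n, (p.1 ^ m) ^ i) * p.2.1 =
        (∑ i ∈ Finset.range m, (p.1 ^ n) ^ i) * p.2.2} : ℤ) =
      ((Nat.gcd (n * m) (Fintype.card F - 1) : ℤ)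
          - Nat.gcd n (Fintype.card F - 1) - Nat.gcd m (Fintype.card F - 1) + 2) *
        ((Fintype.card F : ℤ) ^ 2 - Fintype.card F) := by
  classical
  set q := Fintype.card F with hq
  have hq1 : 1 ≤ q := Fintype.card_pos
  have hnm : 0 < n * m := Nat.mul_pos hn hm
  -- characteristic facts
  have hcharm : (m : F) ≠ 0 := fun h =>
    hchar (dvd_mul_of_dvd_left ((CharP.cast_eq_zero_iff F (ringChar F) m).mp h) n)
  have hcharn : (n : F) ≠ 0 := fun h =>
    hchar (dvd_mul_of_dvd_right ((CharP.cast_eq_zero_iff F (ringChar F) n).mp h) m)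
  -- characterization of vanishing of the cyclotomic-like sums
  have hAchar : ∀ t : F,
      ((∑ i ∈ Finset.range n, (t ^ m) ^ i) = 0 ↔ t ^ (n * m) = 1 ∧ ¬ t ^ m = 1) := by
    intro t
    have hpow : (t ^ m) ^ n = t ^ (n * m) := by rw [← pow_mul, mul_comm]
    rcases eq_or_ne (t ^ m) 1 with h1 | h1
    · rw [show (∑ i ∈ Finset.range n, (t ^ m) ^ i) = (n : F) by
        rw [h1]; simp]
      exact ⟨fun h => absurd h hcharn, fun h => absurd h1 h.2⟩
    · have hg := geom_sum_mul (t ^ m) n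
      constructor
      · intro h0
        rw [h0, zero_mul] at hg
        refine ⟨?_, h1⟩
        rw [← hpow]
        have := hg.symm
        rw [sub_eq_zero] at this
        exact this
      · rintro ⟨hu, -⟩
        rw [hpow, hu, sub_self] at hg
        rcases mul_eq_zero.mp hg with h' | h'
        · exact h'
        · exact absurd (sub_eq_zero.mp h') h1
  have hBchar : ∀ t : F,
      ((∑ i ∈ Finset.range m, (t ^ n) ^ i) = 0 ↔ t ^ (n * m) = 1 ∧ ¬ t ^ n = 1) := by
    intro t
    have hpow : (t ^ n) ^ m = t ^ (n * m) := by rw [← pow_mul]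
    rcases eq_or_ne (t ^ n) 1 with h1 | h1
    · rw [show (∑ i ∈ Finset.range m, (t ^ n) ^ i) = (m : F) by
        rw [h1]; simp]
      exact ⟨fun h => absurd h hcharm, fun h => absurd h1 h.2⟩
    · have hg := geom_sum_mul (t ^ n) m
      constructor
      · intro h0
        rw [h0, zero_mul] at hg
        refine ⟨?_, h1⟩
        rw [← hpow]
        have := hg.symm
        rw [sub_eq_zero] at this
        exact this
      · rintro ⟨hu, -⟩
        rw [hpow, hu, sub_self] at hg
        rcases mul_eq_zero.mp hg with h' | h'
        · exact h'
        · exact absurd (sub_eq_zero.mp h') h1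
  -- predicate and basic sets
  set P : F × F × F → Prop := fun p => p.1 ≠ 0 ∧
      (∑ i ∈ Finset.range n, (p.1 ^ m) ^ i) * p.2.1 =
      (∑ i ∈ Finset.range m, (p.1 ^ n) ^ i) * p.2.2 with hP
  set s : Finset F := univ.filter (fun t : F => t ≠ 0) with hs
  set c : F → Prop := fun t => (∑ i ∈ Finset.range n, (t ^ m) ^ i) = 0 ∧
      (∑ i ∈ Finset.range m, (t ^ n) ^ i) = 0 with hc
  -- Step 1 : Nat.card to Finset.card
  have h1 : Nat.card {p : F × F × F | P p} = #(univ.filter P) := by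
    rw [Nat.card_eq_fintype_card, ← Set.toFinset_card, Set.toFinset_setOf]
  -- Step 2 : fiberwise count
  have h2 : #(univ.filter P) = ∑ t ∈ s, #((univ.filter P).filter fun p => p.1 = t) := by
    refine card_eq_sum_card_fiberwise fun p hp => ?_
    simp only [hs, mem_coe, mem_filter, mem_univ, true_and] at hp ⊢
    exact hp.1
  -- Step 3 : each fiber is a "line" count
  have h3 : ∀ t ∈ s, #((univ.filter P).filter fun p => p.1 = t)
      = #(univ.filter fun ab : F × F =>
          (∑ i ∈ Finset.range n, (t ^ m) ^ i) * ab.1 =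
          (∑ i ∈ Finset.range m, (t ^ n) ^ i) * ab.2) := by
    intro t ht
    simp only [hs, mem_filter, mem_univ, true_and] at ht
    refine card_nbij' (fun p => p.2) (fun ab => (t, ab)) ?_ ?_ ?_ ?_
    · rintro ⟨t', α, β⟩ hp
      simp only [mem_coe, mem_filter, mem_univ, true_and, hP] at hp ⊢
      obtain ⟨⟨-, hEq⟩, rfl⟩ := hp
      exact hEq
    · rintro ⟨α, β⟩ hab
      have hab' := (mem_filter.mp hab).2
      exact mem_filter.mpr ⟨mem_filter.mpr ⟨mem_univ _, ⟨ht, hab'⟩⟩, rfl⟩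
    · rintro ⟨t', α, β⟩ hp
      simp only [mem_coe, mem_filter] at hp
      simp [hp.2]
    · rintro ⟨α, β⟩ _
      rfl
  -- Step 4 : value of each line count
  have h4 : ∀ t ∈ s, #(univ.filter fun ab : F × F =>
          (∑ i ∈ Finset.range n, (t ^ m) ^ i) * ab.1 =
          (∑ i ∈ Finset.range m, (t ^ n) ^ i) * ab.2)
        = if c t then q * q else q := by
    intro t _
    by_cases hct : c t
    · rw [if_pos hct]
      obtain ⟨hA0, hB0⟩ := hct
      have : (univ.filter fun ab : F × F =>
          (∑ i ∈ Finset.range n, (t ^ m) ^ i) * ab.1 =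
          (∑ i ∈ Finset.range m, (t ^ n) ^ i) * ab.2) = univ := by
        refine filter_true_of_mem fun ab _ => ?_
        rw [hA0, hB0, zero_mul, zero_mul]
      rw [this, card_univ, Fintype.card_prod]
    · rw [if_neg hct]
      exact tk_line_card _ _ hct
  -- combine the sum
  have h5 : #(univ.filter P) = #(s.filter c) * (q * q) + #(s.filter fun t => ¬ c t) * q := by
    rw [h2, Finset.sum_congr rfl fun t ht => (h3 t ht).trans (h4 t ht), Finset.sum_ite,
      Finset.sum_const, Finset.sum_const, smul_eq_mul, smul_eq_mul]
  -- the "doubly degenerate" locus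
  have hZeq : s.filter c
      = (univ.filter fun t : F => t ^ (n * m) = 1) \ ((univ.filter fun t : F => t ^ n = 1) ∪ (univ.filter fun t : F => t ^ m = 1)) := by
    ext t
    simp only [hs, hc, mem_filter, mem_univ, true_and, mem_sdiff, mem_union, not_or,
      filter_filter]
    rw [hAchar t, hBchar t]
    constructor
    · rintro ⟨-, ⟨h1, h2⟩, ⟨-, h3⟩⟩
      exact ⟨h1, h3, h2⟩
    · rintro ⟨h1, h2, h3⟩
      have ht0 : t ≠ 0 := by
        intro h0
        rw [h0, zero_pow hnm.ne'] at h1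
        exact zero_ne_one h1
      exact ⟨ht0, ⟨h1, h3⟩, ⟨h1, h2⟩⟩
  -- counting roots of unity
  have hU : ((univ.filter fun t : F => t ^ n = 1) ∪ (univ.filter fun t : F => t ^ m = 1))
      ⊆ (univ.filter fun t : F => t ^ (n * m) = 1) := by
    intro t ht
    simp only [mem_union, mem_filter, mem_univ, true_and] at ht ⊢
    rcases ht with h | h
    · rw [pow_mul, h, one_pow]
    · rw [mul_comm, pow_mul, h, one_pow]
  have hInter : ((univ.filter fun t : F => t ^ n = 1) ∩ (univ.filter fun t : F => t ^ m = 1))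
      = {(1 : F)} := by
    ext t
    simp only [mem_inter, mem_filter, mem_univ, true_and, mem_singleton]
    constructor
    · rintro ⟨h1, h2⟩
      have hd1 : orderOf t ∣ 1 := hcop ▸ Nat.dvd_gcd
        (orderOf_dvd_of_pow_eq_one h2) (orderOf_dvd_of_pow_eq_one h1)
      rw [Nat.dvd_one] at hd1
      exact orderOf_eq_one_iff.mp hd1
    · rintro rfl
      exact ⟨one_pow n, one_pow m⟩
  -- the counting relation in ℕ
  have r2 : #(s.filter c) + Nat.gcd n (q - 1) + Nat.gcd m (q - 1)
      = Nat.gcd (n * m) (q - 1) + 1 := by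
    have e1 : #((univ.filter fun t : F => t ^ (n * m) = 1) \ ((univ.filter fun t : F => t ^ n = 1) ∪ (univ.filter fun t : F => t ^ m = 1)))
        + #((univ.filter fun t : F => t ^ n = 1) ∪ (univ.filter fun t : F => t ^ m = 1))
        = #(univ.filter fun t : F => t ^ (n * m) = 1) :=
      card_sdiff_add_card_eq_card hU
    have e2 : #((univ.filter fun t : F => t ^ n = 1) ∪ (univ.filter fun t : F => t ^ m = 1))
        + #((univ.filter fun t : F => t ^ n = 1) ∩ (univ.filter fun t : F => t ^ m = 1))
        = #(univ.filter fun t : F => t ^ n = 1) + #(univ.filter fun t : F => t ^ m = 1) :=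
      card_union_add_card_inter _ _
    rw [hInter, card_singleton] at e2
    rw [hZeq]
    rw [tk_card_roots n hn, tk_card_roots m hm] at e2
    rw [tk_card_roots (n * m) hnm] at e1
    rw [← hq] at e1 e2
    omega
  have r1 : #(s.filter c) + #(s.filter fun t => ¬ c t) + 1 = q := by
    have := card_filter_add_card_filter_not (s := s) (p := c)
    have hscard : #s = q - 1 := by
      rw [hs, filter_ne', card_erase_of_mem (mem_univ 0), card_univ]
    omega
  -- finish
  rw [show {p : F × F × F | p.1 ≠ 0 ∧
        (∑ i ∈ Finset.range n, (p.1 ^ m) ^ i) * p.2.1 =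
        (∑ i ∈ Finset.range m, (p.1 ^ n) ^ i) * p.2.2} = {p : F × F × F | P p} from rfl,
    h1, h5]
  push_cast
  have r1' : (#(s.filter c) : ℤ) + #(s.filter fun t => ¬ c t) + 1 = q := by exact_mod_cast r1
  have r2' : (#(s.filter c) : ℤ) + Nat.gcd n (q - 1) + Nat.gcd m (q - 1)
      = Nat.gcd (n * m) (q - 1) + 1 := by exact_mod_cast r2
  linear_combination (q : ℤ) * r1' + ((q : ℤ) ^ 2 - q) * r2'
end

section
/- For coprime integers m, n > 2, there is no single polynomial P ∈ ℤ[t] such that P(p) equals the number of points over F_p of the AGL_1 representation variety of the (m,n)-torus knot, i.e., P(p) = (gcd(nm,p-1) - gcd(n,p-1) - gcd(m,p-1) + 2)(p² - p), for all sufficiently large primes p. -/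
private lemma aux_poly_zero (Q : Polynomial ℤ) (S : Set ℕ) (hS : S.Infinite)
    (h : ∀ p ∈ S, Q.eval (p : ℤ) = 0) : Q = 0 := by
  apply Polynomial.eq_zero_of_infinite_isRoot
  have : ((fun p : ℕ => (p : ℤ)) '' S).Infinite :=
    hS.image (Set.injOn_of_injective (fun a b => by exact_mod_cast id))
  refine this.mono ?_
  rintro x ⟨p, hp, rfl⟩
  exact h p hp

/-- For coprime `m, n > 2`, no single integer polynomial `P` satisfies
`P(p) = (gcd(nm,p-1) - gcd(n,p-1) - gcd(m,p-1) + 2)(p² - p)` for all sufficiently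
large primes `p`. -/
theorem stmt12 (m n : ℕ) (hm : 2 < m) (hn : 2 < n) (hcop : Nat.Coprime m n) :
    ¬ ∃ (P : Polynomial ℤ) (N : ℕ), ∀ p : ℕ, p.Prime → N < p →
      P.eval (p : ℤ) =
        ((Nat.gcd (n * m) (p - 1) : ℤ) - Nat.gcd n (p - 1) - Nat.gcd m (p - 1) + 2) *
          ((p : ℤ) ^ 2 - p) := by
  rintro ⟨P, N, hP⟩
  set q := n * m with hq
  have hq2 : 2 < q := by calc 2 < n := hn
                              _ ≤ n * m := Nat.le_mul_of_pos_right n (by omega)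
  haveI : NeZero q := ⟨by omega⟩
  -- branch 1: primes ≡ 1 mod q
  set S1 : Set ℕ := {p : ℕ | p.Prime ∧ (p : ZMod q) = (1 : ZMod q)} with hS1def
  have hS1 : S1.Infinite := Nat.infinite_setOfPred_prime_and_eq_mod isUnit_one
  set c1 : ℤ := (q : ℤ) - n - m + 2 with hc1
  have h1 : P - Polynomial.C c1 * (Polynomial.X ^ 2 - Polynomial.X) = 0 := by
    have hfin : (S1 ∩ Set.Iic N).Finite := (Set.finite_Iic N).inter_of_right S1
    apply aux_poly_zero _ (S1 \ (S1 ∩ Set.Iic N)) (hS1.diff hfin)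
    rintro p ⟨⟨hp, hmod⟩, hgt⟩
    have hpgt : N < p := by
      by_contra hc
      exact hgt ⟨⟨hp, hmod⟩, by simpa using Nat.le_of_not_lt hc⟩
    have hp1 : 1 ≤ p := hp.one_lt.le
    have hdvd : q ∣ p - 1 := by
      have := (ZMod.natCast_eq_natCast_iff p 1 q).mp (by simpa using hmod)
      exact (Nat.modEq_iff_dvd' hp1).mp this.symm
    have g1 : Nat.gcd q (p - 1) = q := Nat.gcd_eq_left hdvd
    have g2 : Nat.gcd n (p - 1) = n := Nat.gcd_eq_left (dvd_trans ⟨m, rfl⟩ hdvd)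
    have g3 : Nat.gcd m (p - 1) = m := Nat.gcd_eq_left (dvd_trans ⟨n, mul_comm n m⟩ hdvd)
    have := hP p hp hpgt
    rw [g1, g2, g3] at this
    simp only [Polynomial.eval_sub, Polynomial.eval_mul, Polynomial.eval_C,
      Polynomial.eval_pow, Polynomial.eval_X, this, hc1]
    ring
  -- branch 2: primes ≡ -1 mod q
  set S2 : Set ℕ := {p : ℕ | p.Prime ∧ (p : ZMod q) = (-1 : ZMod q)} with hS2def
  have hS2 : S2.Infinite := Nat.infinite_setOfPred_prime_and_eq_mod isUnit_one.neg
  have h2 : P - (Polynomial.X ^ 2 - Polynomial.X) = 0 := by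
    have hfin : (S2 ∩ Set.Iic (max N 2)).Finite := (Set.finite_Iic _).inter_of_right S2
    apply aux_poly_zero _ (S2 \ (S2 ∩ Set.Iic (max N 2))) (hS2.diff hfin)
    rintro p ⟨⟨hp, hmod⟩, hgt⟩
    have hpgt : max N 2 < p := by
      by_contra hc
      exact hgt ⟨⟨hp, hmod⟩, by simpa using Nat.le_of_not_lt hc⟩
    have hpN : N < p := lt_of_le_of_lt (le_max_left _ _) hpgt
    have hp2 : 2 < p := lt_of_le_of_lt (le_max_right _ _) hpgt
    have hdvd : q ∣ p + 1 := by
      have : ((p + 1 : ℕ) : ZMod q) = 0 := by push_cast; rw [hmod]; ring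
      exact (ZMod.natCast_eq_zero_iff _ _).mp this
    have hodd : 2 ∣ p - 1 := by
      rcases hp.eq_two_or_odd' with h | h
      · omega
      · obtain ⟨k, hk⟩ := h; omega
    -- gcd(d, p-1) = gcd(d, 2) for d ∣ q
    have key : ∀ d : ℕ, d ∣ q → Nat.gcd d (p - 1) = Nat.gcd d 2 := by
      intro d hd
      apply Nat.dvd_antisymm
      · apply Nat.dvd_gcd (Nat.gcd_dvd_left _ _)
        have h1 : Nat.gcd d (p - 1) ∣ p + 1 := dvd_trans (Nat.gcd_dvd_left _ _) (hd.trans hdvd)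
        have h2 : Nat.gcd d (p - 1) ∣ p - 1 := Nat.gcd_dvd_right _ _
        have : Nat.gcd d (p - 1) ∣ (p + 1) - (p - 1) := Nat.dvd_sub h1 h2
        simpa [show p + 1 - (p - 1) = 2 by omega] using this
      · exact Nat.dvd_gcd (Nat.gcd_dvd_left _ _) ((Nat.gcd_dvd_right d 2).trans hodd)
    have g1 := key q dvd_rfl
    have g2 := key n ⟨m, rfl⟩
    have g3 := key m ⟨n, mul_comm n m⟩
    -- gcd q 2 - gcd n 2 - gcd m 2 + 2 = 1
    have hgcd2 : (Nat.gcd q 2 : ℤ) - Nat.gcd n 2 - Nat.gcd m 2 + 2 = 1 := by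
      have hnm : ¬ (2 ∣ n ∧ 2 ∣ m) := by
        rintro ⟨h1, h2⟩
        have := Nat.eq_one_of_dvd_coprimes hcop h2 h1
        omega
      have e : ∀ k : ℕ, Nat.gcd k 2 = if 2 ∣ k then 2 else 1 := by
        intro k
        split
        · next h => exact Nat.gcd_eq_right h
        · next h =>
          exact ((Nat.Prime.coprime_iff_not_dvd Nat.prime_two).mpr h).symm
      rw [e, e, e]
      rcases Nat.even_or_odd n with hne | hno
      · have h2n : 2 ∣ n := hne.two_dvd
        have h2m : ¬ 2 ∣ m := fun h => hnm ⟨h2n, h⟩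
        have h2q : 2 ∣ q := Dvd.dvd.mul_right h2n m
        simp [h2n, h2m, h2q]
      · rcases Nat.even_or_odd m with hme | hmo
        · have h2m : 2 ∣ m := hme.two_dvd
          have h2n : ¬ 2 ∣ n := fun h => hnm ⟨h, h2m⟩
          have h2q : 2 ∣ q := Dvd.dvd.mul_left h2m n
          simp [h2n, h2m, h2q]
        · have hno' := Nat.odd_iff.mp hno
          have hmo' := Nat.odd_iff.mp hmo
          have h2n : ¬ 2 ∣ n := by omega
          have h2m : ¬ 2 ∣ m := by omega
          have h2q : ¬ 2 ∣ q := by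
            intro h
            rcases (Nat.prime_two.dvd_mul.mp h) with h | h
            · exact h2n h
            · exact h2m h
          simp [h2n, h2m, h2q]
    have := hP p hp hpN
    rw [g1, g2, g3] at this
    simp only [Polynomial.eval_sub, Polynomial.eval_pow, Polynomial.eval_X, this]
    rw [hgcd2]; ring
  -- conclude
  have hPeq : P = Polynomial.C c1 * (Polynomial.X ^ 2 - Polynomial.X) := by
    linear_combination (norm := ring_nf) h1
  have hPeq2 : P = Polynomial.X ^ 2 - Polynomial.X := by
    linear_combination (norm := ring_nf) h2
  have := congrArg (Polynomial.eval (2 : ℤ)) (hPeq.symm.trans hPeq2)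
  simp only [Polynomial.eval_mul, Polynomial.eval_C, Polynomial.eval_sub,
    Polynomial.eval_pow, Polynomial.eval_X] at this
  have hmz : (3 : ℤ) ≤ m := by exact_mod_cast hm
  have hnz : (3 : ℤ) ≤ n := by exact_mod_cast hn
  have hqz : (q : ℤ) = n * m := by exact_mod_cast hq
  rw [hc1, hqz] at this
  nlinarith [mul_le_mul hnz hmz (by norm_num) (by linarith : (0:ℤ) ≤ n)]
end
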